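/- Let n ≥ 2 be an integer and θ ∈ (0,1), and let ν be a cubature formula of strength 3 on S^{n-1} with ‖ν‖_θ = (2n)^{1−θ}. Then there exists an orthonormal basis u_1, …, u_n of ℝ^n such that ν is the uniform probability measure on the 2n points {±u_1, …, ±u_n}. -/

import Mathlib

open MeasureTheory Metric
open scoped ENNReal

noncomputable section

abbrev Sph (n : ℕ) : Type := Metric.sphere (0 : EuclideanSpace ℝ (Fin n)) 1

def sphMap {n : ℕ} (U : EuclideanSpace ℝ (Fin n) ≃ₗᵢ[ℝ] EuclideanSpace ℝ (Fin n)) :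
    Sph n → Sph n := fun x =>
  ⟨U x, by
    have hx : ‖(x : EuclideanSpace ℝ (Fin n))‖ = 1 := mem_sphere_zero_iff_norm.mp x.2
    simpa [mem_sphere_zero_iff_norm] using hx⟩

lemma sphMap_continuous {n : ℕ}
    (U : EuclideanSpace ℝ (Fin n) ≃ₗᵢ[ℝ] EuclideanSpace ℝ (Fin n)) :
    Continuous (sphMap U) :=
  (U.continuous.comp continuous_subtype_val).subtype_mk _

def antipode {n : ℕ} : Sph n → Sph n := fun x =>
  ⟨-(x : EuclideanSpace ℝ (Fin n)), by
    have hx : ‖(x : EuclideanSpace ℝ (Fin n))‖ = 1 := mem_sphere_zero_iff_norm.mp x.2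
    simpa [mem_sphere_zero_iff_norm] using hx⟩

/-- `σ` is invariant under all orthogonal transformations of `ℝⁿ`. -/
def IsRotationInvariant {n : ℕ} (σ : Measure (Sph n)) : Prop :=
  ∀ U : EuclideanSpace ℝ (Fin n) ≃ₗᵢ[ℝ] EuclideanSpace ℝ (Fin n),
    Measure.map (sphMap U) σ = σ

/-- Evaluation of a polynomial on `ℝⁿ` at a point of the sphere. -/
def polyEval {n : ℕ} (p : MvPolynomial (Fin n) ℝ) (x : Sph n) : ℝ :=
  MvPolynomial.eval (fun i => (x : EuclideanSpace ℝ (Fin n)) i) p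

/-- `ν` is finitely supported. -/
def IsFinSupported {n : ℕ} (ν : Measure (Sph n)) : Prop :=
  ∃ s : Finset (Sph n), ν ((↑s : Set (Sph n))ᶜ) = 0

/-- `ν` is a cubature formula of strength `t` w.r.t. the reference measure `σ`. -/
def IsCubature {n : ℕ} (t : ℕ) (σ ν : Measure (Sph n)) : Prop :=
  IsProbabilityMeasure ν ∧ IsFinSupported ν ∧
    ∀ p : MvPolynomial (Fin n) ℝ, p.totalDegree ≤ t →
      ∫ x, polyEval p x ∂ν = ∫ x, polyEval p x ∂σ

/-- `‖ν‖_θ = ∑ νᵢ^θ`, the sum of the `θ`-th powers of the point masses of `ν`. -/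
def thetaNorm {n : ℕ} (ν : Measure (Sph n)) (θ : ℝ) : ℝ :=
  ∑' u : Sph n, (ν {u}).toReal ^ θ

open scoped RealInnerProductSpace

section aux
variable {n : ℕ}

lemma sph_norm (x : Sph n) : ‖(x : EuclideanSpace ℝ (Fin n))‖ = 1 :=
  mem_sphere_zero_iff_norm.mp x.2

lemma sph_inner_self (x : Sph n) :
    ⟪(x : EuclideanSpace ℝ (Fin n)), (x : EuclideanSpace ℝ (Fin n))⟫ = 1 := by
  rw [real_inner_self_eq_norm_sq, sph_norm]; norm_num

lemma antipode_coe (x : Sph n) :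
    (antipode x : EuclideanSpace ℝ (Fin n)) = -(x : EuclideanSpace ℝ (Fin n)) := rfl

lemma antipode_antipode (x : Sph n) : antipode (antipode x) = x := by
  apply Subtype.ext; simp [antipode_coe]

lemma antipode_ne (x : Sph n) : antipode x ≠ x := by
  intro h
  have := congrArg (fun y : Sph n => (y : EuclideanSpace ℝ (Fin n))) h
  simp only [antipode_coe] at this
  have hx := sph_norm x
  have hx0 : (x : EuclideanSpace ℝ (Fin n)) = 0 := by
    have h2 := congrArg (· + (x : EuclideanSpace ℝ (Fin n))) this
    simp only [neg_add_cancel] at h2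
    have := h2.symm
    rwa [← two_smul ℝ, smul_eq_zero, or_iff_right (by norm_num : (2:ℝ) ≠ 0)] at this
  rw [hx0] at hx; simp at hx

lemma integrable_cont {μ : Measure (Sph n)} [IsFiniteMeasure μ] {f : Sph n → ℝ}
    (hf : Continuous f) : Integrable f μ :=
  hf.integrable_of_hasCompactSupport (HasCompactSupport.of_compactSpace f)

lemma integral_sphMap {σ : Measure (Sph n)} (hσ : IsRotationInvariant σ)
    (U : EuclideanSpace ℝ (Fin n) ≃ₗᵢ[ℝ] EuclideanSpace ℝ (Fin n))
    {f : Sph n → ℝ} (hf : Continuous f) :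
    ∫ x, f (sphMap U x) ∂σ = ∫ x, f x ∂σ := by
  conv_rhs => rw [← hσ U]
  rw [integral_map (sphMap_continuous U).aemeasurable hf.aestronglyMeasurable]

lemma sphMap_neg_eq_antipode :
    sphMap (LinearIsometryEquiv.neg ℝ (E := EuclideanSpace ℝ (Fin n))) = (antipode : Sph n → Sph n) := by
  funext x; apply Subtype.ext; rfl

lemma integral_odd {σ : Measure (Sph n)} [IsProbabilityMeasure σ] (hσ : IsRotationInvariant σ)
    {f : Sph n → ℝ} (hf : Continuous f) (hodd : ∀ x, f (antipode x) = - f x) :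
    ∫ x, f x ∂σ = 0 := by
  have h := integral_sphMap hσ (LinearIsometryEquiv.neg ℝ) hf
  rw [sphMap_neg_eq_antipode] at h
  simp only [hodd] at h
  rw [integral_neg] at h
  linarith

end aux

section part3
variable {n : ℕ}

lemma sum_sq_coords (x : Sph n) : ∑ i, ((x : EuclideanSpace ℝ (Fin n)) i)^2 = 1 := by
  have h := sph_norm x
  have := EuclideanSpace.norm_eq (x : EuclideanSpace ℝ (Fin n))
  rw [h] at this
  have h2 : Real.sqrt (∑ i, (x : EuclideanSpace ℝ (Fin n)) i ^ 2) = 1 := by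
    simpa [sq_abs] using this.symm
  have h3 := congrArg (·^2) h2
  simpa [Real.sq_sqrt (Finset.sum_nonneg fun i _ => sq_nonneg _)] using h3

lemma cont_inner_pow (a : EuclideanSpace ℝ (Fin n)) (k : ℕ) :
    Continuous (fun x : Sph n => (⟪a, (x : EuclideanSpace ℝ (Fin n))⟫)^k) :=
  ((continuous_const.inner continuous_subtype_val).pow k)

lemma sigma_unit_eq {σ : Measure (Sph n)} [IsProbabilityMeasure σ]
    (hσ : IsRotationInvariant σ) {a b : EuclideanSpace ℝ (Fin n)}
    (ha : ‖a‖ = 1) (hb : ‖b‖ = 1) (k : ℕ) :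
    ∫ x, (⟪a, (x : EuclideanSpace ℝ (Fin n))⟫)^k ∂σ
      = ∫ x, (⟪b, (x : EuclideanSpace ℝ (Fin n))⟫)^k ∂σ := by
  set U : EuclideanSpace ℝ (Fin n) ≃ₗᵢ[ℝ] EuclideanSpace ℝ (Fin n) :=
    Submodule.reflection (ℝ ∙ (a - b))ᗮ with hU
  have hUab : U a = b := Submodule.reflection_sub (by rw [ha, hb])
  have key : ∀ x : Sph n, (⟪a, (x : EuclideanSpace ℝ (Fin n))⟫)^k
      = (⟪b, ((sphMap U x : Sph n) : EuclideanSpace ℝ (Fin n))⟫)^k := by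
    intro x
    have : ((sphMap U x : Sph n) : EuclideanSpace ℝ (Fin n)) = U x := rfl
    rw [this, ← hUab, LinearIsometryEquiv.inner_map_map]
  calc ∫ x, (⟪a, (x : EuclideanSpace ℝ (Fin n))⟫)^k ∂σ
      = ∫ x, (⟪b, ((sphMap U x : Sph n) : EuclideanSpace ℝ (Fin n))⟫)^k ∂σ := by
        simp only [key]
    _ = ∫ x, (⟪b, (x : EuclideanSpace ℝ (Fin n))⟫)^k ∂σ :=
        integral_sphMap hσ U (cont_inner_pow b k)

lemma sigma_moment2 {σ : Measure (Sph n)} [IsProbabilityMeasure σ]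
    (hσ : IsRotationInvariant σ) (hn : 0 < n) (a : EuclideanSpace ℝ (Fin n)) :
    ∫ x, (⟪a, (x : EuclideanSpace ℝ (Fin n))⟫)^2 ∂σ = ‖a‖^2 / n := by
  have hn' : (0:ℝ) < n := by exact_mod_cast hn
  -- the value for the first basis vector
  set e : Fin n → EuclideanSpace ℝ (Fin n) := fun i => EuclideanSpace.single i (1:ℝ) with he
  have hnorm_e : ∀ i, ‖e i‖ = 1 := by intro i; simp [he, EuclideanSpace.norm_single]
  set c : ℝ := ∫ x, (⟪e ⟨0, hn⟩, (x : EuclideanSpace ℝ (Fin n))⟫)^2 ∂σ with hc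
  have hunit : ∀ b : EuclideanSpace ℝ (Fin n), ‖b‖ = 1 →
      ∫ x, (⟪b, (x : EuclideanSpace ℝ (Fin n))⟫)^2 ∂σ = c :=
    fun b hb => sigma_unit_eq hσ hb (hnorm_e ⟨0, hn⟩) 2
  have hsum : ∑ i : Fin n, ∫ x, (⟪e i, (x : EuclideanSpace ℝ (Fin n))⟫)^2 ∂σ = 1 := by
    rw [← integral_finset_sum _ (fun i _ => integrable_cont (cont_inner_pow (e i) 2))]
    have : ∀ x : Sph n, ∑ i : Fin n, (⟪e i, (x : EuclideanSpace ℝ (Fin n))⟫)^2 = 1 := by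
      intro x
      have : ∀ i, ⟪e i, (x : EuclideanSpace ℝ (Fin n))⟫ = (x : EuclideanSpace ℝ (Fin n)) i := by
        intro i; simp [he, EuclideanSpace.inner_single_left]
      simp only [this]
      exact sum_sq_coords x
    simp only [this]
    simp
  have hcval : c = 1 / n := by
    have : ∑ i : Fin n, c = 1 := by
      rw [← hsum]; exact Finset.sum_congr rfl fun i _ => (hunit (e i) (hnorm_e i)).symm
    rw [Finset.sum_const, Finset.card_univ, Fintype.card_fin, nsmul_eq_mul] at this
    field_simp at this ⊢
    linarith
  rcases eq_or_ne a 0 with rfl | ha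
  · simp
  · have hna : ‖a‖ ≠ 0 := norm_ne_zero_iff.mpr ha
    have hbu : ‖(‖a‖⁻¹ • a)‖ = 1 := by
      rw [norm_smul]; simp [abs_of_nonneg (norm_nonneg a), inv_mul_cancel₀ hna]
    have hb := hunit _ hbu
    have expand : ∀ x : Sph n, (⟪a, (x : EuclideanSpace ℝ (Fin n))⟫)^2
        = ‖a‖^2 * (⟪‖a‖⁻¹ • a, (x : EuclideanSpace ℝ (Fin n))⟫)^2 := by
      intro x
      rw [real_inner_smul_left]
      ring_nf
      field_simp
    calc ∫ x, (⟪a, (x : EuclideanSpace ℝ (Fin n))⟫)^2 ∂σ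
        = ∫ x, ‖a‖^2 * (⟪‖a‖⁻¹ • a, (x : EuclideanSpace ℝ (Fin n))⟫)^2 ∂σ := by
          simp only [expand]
      _ = ‖a‖^2 * c := by rw [integral_const_mul, hb]
      _ = ‖a‖^2 / n := by rw [hcval]; ring

lemma sigma_moment3 {σ : Measure (Sph n)} [IsProbabilityMeasure σ]
    (hσ : IsRotationInvariant σ) (a : EuclideanSpace ℝ (Fin n)) :
    ∫ x, (⟪a, (x : EuclideanSpace ℝ (Fin n))⟫)^3 ∂σ = 0 := by
  apply integral_odd hσ (cont_inner_pow a 3)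
  intro x
  rw [antipode_coe, inner_neg_right]
  ring

end part3

section part4
variable {n : ℕ}

lemma finset_null {ν : Measure (Sph n)} (t : Finset (Sph n))
    (h : ∀ x ∈ t, ν {x} = 0) : ν (↑t : Set (Sph n)) = 0 := by
  have heq : (↑t : Set (Sph n)) = ⋃ x ∈ (↑t : Set (Sph n)), {x} :=
    (Set.biUnion_of_singleton _).symm
  rw [heq, measure_biUnion_null_iff t.countable_toSet]
  exact fun x hx => h x hx

lemma fin_supp_repr (ν : Measure (Sph n)) [IsProbabilityMeasure ν] (h : IsFinSupported ν) :
    ∃ s : Finset (Sph n), (∀ x ∈ s, ν {x} ≠ 0) ∧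
      ν = ∑ x ∈ s, ν {x} • Measure.dirac x := by
  obtain ⟨s₀, hs₀⟩ := h
  classical
  refine ⟨s₀.filter (fun x => ν {x} ≠ 0), fun x hx => (Finset.mem_filter.mp hx).2, ?_⟩
  set s := s₀.filter (fun x => ν {x} ≠ 0) with hs
  have hnull : ν ((↑s : Set (Sph n))ᶜ) = 0 := by
    have hsub : ((↑s : Set (Sph n))ᶜ) ⊆ ((↑s₀ : Set (Sph n))ᶜ) ∪
        (↑(s₀.filter (fun x => ν {x} = 0)) : Set (Sph n)) := by
      intro x hx
      simp only [Set.mem_compl_iff, Finset.coe_filter, Set.mem_setOf_eq, hs,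
        Finset.mem_filter, not_and, not_ne_iff, Set.mem_union, Finset.mem_coe] at hx ⊢
      by_cases hx0 : x ∈ s₀
      · right; exact ⟨hx0, hx hx0⟩
      · left; exact hx0
    refine measure_mono_null hsub (le_antisymm ?_ zero_le)
    calc ν _ ≤ ν ((↑s₀ : Set (Sph n))ᶜ) + ν (↑(s₀.filter (fun x => ν {x} = 0)) : Set (Sph n)) :=
          measure_union_le _ _
    _ = 0 := by
        rw [hs₀, finset_null _ (fun x hx => (Finset.mem_filter.mp hx).2)]; simp
  ext A hA
  have hAsplit : ν A = ν (A ∩ ↑s) := by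
    have : ν (A \ ↑s) = 0 := measure_mono_null (Set.diff_subset_compl A ↑s) hnull
    rw [← measure_inter_add_diff A (Finset.measurableSet s), this, add_zero]
  have hinter : (A ∩ ↑s : Set (Sph n)) = ⋃ x ∈ s.filter (· ∈ A), ({x} : Set (Sph n)) := by
    ext y
    simp only [Set.mem_inter_iff, Finset.mem_coe, Set.mem_iUnion, Finset.mem_filter,
      Set.mem_singleton_iff]
    constructor
    · rintro ⟨hyA, hys⟩; exact ⟨y, ⟨hys, hyA⟩, rfl⟩
    · rintro ⟨x, ⟨hxs, hxA⟩, rfl⟩; exact ⟨hxA, hxs⟩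
  rw [hAsplit, hinter, measure_biUnion_finset ?hd (fun x _ => measurableSet_singleton x)]
  case hd =>
    intro x hx y hy hxy
    simp only [Function.onFun]
    exact Set.disjoint_singleton.mpr hxy
  rw [Measure.coe_finset_sum, Finset.sum_apply]
  simp only [Measure.smul_apply, Measure.dirac_apply' _ hA, smul_eq_mul]
  rw [Finset.sum_filter]
  apply Finset.sum_congr rfl
  intro x hx
  by_cases hxA : x ∈ A <;> simp [hxA, Set.indicator]

lemma integral_repr {ν : Measure (Sph n)} [IsProbabilityMeasure ν] {s : Finset (Sph n)}
    (hrepr : ν = ∑ x ∈ s, ν {x} • Measure.dirac x)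
    {f : Sph n → ℝ} (hf : Continuous f) :
    ∫ x, f x ∂ν = ∑ x ∈ s, (ν {x}).toReal * f x := by
  have hint : ∀ x : Sph n, Integrable f (ν {x} • Measure.dirac x) :=
    fun x => (integrable_cont hf).smul_measure (measure_ne_top ν _)
  conv_lhs => rw [hrepr]
  rw [integral_finset_sum_measure (fun x _ => hint x)]
  apply Finset.sum_congr rfl
  intro x _
  rw [integral_smul_measure, integral_dirac, smul_eq_mul]

lemma notin_supp_zero {ν : Measure (Sph n)} [IsProbabilityMeasure ν] {s : Finset (Sph n)}
    (hrepr : ν = ∑ x ∈ s, ν {x} • Measure.dirac x) {u : Sph n} (hu : u ∉ s) :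
    ν {u} = 0 := by
  conv_lhs => rw [hrepr]
  rw [Measure.coe_finset_sum, Finset.sum_apply]
  refine Finset.sum_eq_zero fun x hx => ?_
  have hxu : x ≠ u := fun h => hu (h ▸ hx)
  simp [Measure.dirac_apply' _ (measurableSet_singleton u), Set.indicator,
    Set.mem_singleton_iff, hxu]

-- polynomial transfer
lemma inner_pow_poly (a : EuclideanSpace ℝ (Fin n)) (k : ℕ) :
    ∃ p : MvPolynomial (Fin n) ℝ, p.totalDegree ≤ k ∧
      ∀ x : Sph n, polyEval p x = (⟪a, (x : EuclideanSpace ℝ (Fin n))⟫)^k := by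
  refine ⟨(∑ i, MvPolynomial.C (a i) * MvPolynomial.X i)^k, ?_, ?_⟩
  · calc ((∑ i, MvPolynomial.C (a i) * MvPolynomial.X i)^k).totalDegree
        ≤ k * (∑ i, MvPolynomial.C (a i) * MvPolynomial.X i).totalDegree :=
          MvPolynomial.totalDegree_pow _ _
    _ ≤ k * 1 := by
        apply Nat.mul_le_mul_left
        apply MvPolynomial.totalDegree_finsetSum_le
        intro i _
        calc (MvPolynomial.C (a i) * MvPolynomial.X i).totalDegree
            ≤ (MvPolynomial.C (a i)).totalDegree + (MvPolynomial.X i).totalDegree :=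
              MvPolynomial.totalDegree_mul _ _
        _ ≤ 1 := by simp [MvPolynomial.totalDegree_C, MvPolynomial.totalDegree_X]
    _ = k := mul_one k
  · intro x
    simp only [polyEval, map_pow, map_sum, map_mul, MvPolynomial.eval_C, MvPolynomial.eval_X]
    have hin : ⟪a, (x : EuclideanSpace ℝ (Fin n))⟫
        = ∑ i, a i * (x : EuclideanSpace ℝ (Fin n)) i := by
      rw [PiLp.inner_apply]; simp [RCLike.inner_apply]; exact Finset.sum_congr rfl fun i _ => mul_comm _ _
    rw [hin]

lemma cubature_moment {σ ν : Measure (Sph n)} (hν : IsCubature 3 σ ν)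
    (a : EuclideanSpace ℝ (Fin n)) {k : ℕ} (hk : k ≤ 3) :
    ∫ x, (⟪a, (x : EuclideanSpace ℝ (Fin n))⟫)^k ∂ν
      = ∫ x, (⟪a, (x : EuclideanSpace ℝ (Fin n))⟫)^k ∂σ := by
  obtain ⟨p, hdeg, heval⟩ := inner_pow_poly a k
  have := hν.2.2 p (hdeg.trans hk)
  simpa only [heval] using this

end part4

section part5
variable {n : ℕ}

lemma rpow_split {w θ : ℝ} (hw : 0 < w) : w ^ θ = w * w ^ (θ - 1) := by
  have := Real.rpow_add hw 1 (θ - 1)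
  simp only [Real.rpow_one] at this
  rw [← this]; ring_nf

lemma rpow_lower {w c θ : ℝ} (hw : 0 < w) (hwc : w ≤ c) (hθ1 : θ < 1) :
    w * c ^ (θ - 1) ≤ w ^ θ := by
  rw [rpow_split hw]
  have h2 : c ^ (θ - 1) ≤ w ^ (θ - 1) :=
    Real.rpow_le_rpow_of_nonpos hw hwc (by linarith)
  nlinarith

lemma rpow_eq_forces {w c θ : ℝ} (hw : 0 < w) (hwc : w ≤ c) (hθ1 : θ < 1)
    (heq : w * c ^ (θ - 1) = w ^ θ) : w = c := by
  rcases eq_or_lt_of_le hwc with h | h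
  · exact h
  · exfalso
    have h2 : c ^ (θ - 1) < w ^ (θ - 1) :=
      Real.rpow_lt_rpow_of_neg hw h (by linarith)
    rw [rpow_split hw] at heq
    nlinarith

end part5

theorem stmt7 (n : ℕ) (hn : 2 ≤ n)
    (σ : Measure (Sph n)) [IsProbabilityMeasure σ] (hσ : IsRotationInvariant σ)
    (ν : Measure (Sph n)) (hν : IsCubature 3 σ ν)
    (θ : ℝ) (hθ : θ ∈ Set.Ioo (0 : ℝ) 1)
    (hmin : thetaNorm ν θ = ((2 * n : ℕ) : ℝ) ^ (1 - θ)) :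
    ∃ u : Fin n → Sph n,
      Orthonormal ℝ (fun i => (u i : EuclideanSpace ℝ (Fin n))) ∧
      Submodule.span ℝ (Set.range fun i => (u i : EuclideanSpace ℝ (Fin n))) = ⊤ ∧
      ν = ((2 * n : ℕ) : ℝ≥0∞)⁻¹ •
        ∑ i : Fin n, (Measure.dirac (u i) + Measure.dirac (antipode (u i))) := by
  classical
  obtain ⟨hprob, hfin, hcub⟩ := hν
  haveI := hprob
  obtain ⟨s, hpos, hrepr⟩ := fin_supp_repr ν hfin
  set w : Sph n → ℝ := fun x => (ν {x}).toReal with hw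
  have hwpos : ∀ x ∈ s, 0 < w x :=
    fun x hx => ENNReal.toReal_pos (hpos x hx) (measure_ne_top ν _)
  have hn0 : 0 < n := lt_of_lt_of_le (by norm_num) hn
  have hn0' : (0:ℝ) < n := by exact_mod_cast hn0
  have h2n : (0:ℝ) < 2 * n := by linarith
  -- total mass
  have hsum1 : ∑ x ∈ s, w x = 1 := by
    have h := integral_repr hrepr (continuous_const : Continuous (fun _ : Sph n => (1:ℝ)))
    simp only [mul_one] at h
    rw [integral_const] at h
    simp at h
    exact h.symm
  -- second moments
  have hm2 : ∀ a : EuclideanSpace ℝ (Fin n), ‖a‖ = 1 →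
      ∑ x ∈ s, w x * (⟪a, (x : EuclideanSpace ℝ (Fin n))⟫)^2 = 1 / n := by
    intro a ha
    have h1 := integral_repr hrepr (cont_inner_pow a 2)
    have h2 := cubature_moment ⟨hprob, hfin, hcub⟩ a (by norm_num : 2 ≤ 3)
    rw [sigma_moment2 hσ hn0 a, ha] at h2
    rw [h1] at h2
    rw [h2]; norm_num
  -- third moments
  have hm3 : ∀ a : EuclideanSpace ℝ (Fin n),
      ∑ x ∈ s, w x * (⟪a, (x : EuclideanSpace ℝ (Fin n))⟫)^3 = 0 := by
    intro a
    have h1 := integral_repr hrepr (cont_inner_pow a 3)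
    have h2 := cubature_moment ⟨hprob, hfin, hcub⟩ a (le_refl 3)
    rw [sigma_moment3 hσ a] at h2
    rw [h1] at h2
    exact h2
  -- inner products bounded by 1
  have hip : ∀ ξ x : Sph n, |⟪(ξ : EuclideanSpace ℝ (Fin n)), (x : EuclideanSpace ℝ (Fin n))⟫| ≤ 1 := by
    intro ξ x
    have := abs_real_inner_le_norm (ξ : EuclideanSpace ℝ (Fin n)) (x : EuclideanSpace ℝ (Fin n))
    rwa [sph_norm, sph_norm, mul_one] at this
  -- erase sums
  have herase2 : ∀ ξ ∈ s, w ξ +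
      ∑ x ∈ s.erase ξ, w x * (⟪(ξ : EuclideanSpace ℝ (Fin n)), (x : EuclideanSpace ℝ (Fin n))⟫)^2
        = 1 / n := by
    intro ξ hξ
    have := hm2 ξ (sph_norm ξ)
    rw [← Finset.add_sum_erase s _ hξ] at this
    rw [sph_inner_self] at this
    simpa using this
  have herase3 : ∀ ξ ∈ s, w ξ +
      ∑ x ∈ s.erase ξ, w x * (⟪(ξ : EuclideanSpace ℝ (Fin n)), (x : EuclideanSpace ℝ (Fin n))⟫)^3
        = 0 := by
    intro ξ hξ
    have := hm3 ξ
    rw [← Finset.add_sum_erase s _ hξ] at this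
    rw [sph_inner_self] at this
    simpa using this
  -- termwise inequality: -t^3 ≤ t^2
  have htermle : ∀ ξ ∈ s, ∀ x ∈ s.erase ξ,
      w x * (-(⟪(ξ : EuclideanSpace ℝ (Fin n)), (x : EuclideanSpace ℝ (Fin n))⟫)^3)
        ≤ w x * (⟪(ξ : EuclideanSpace ℝ (Fin n)), (x : EuclideanSpace ℝ (Fin n))⟫)^2 := by
    intro ξ hξ x hx
    have hwx := (hwpos x (Finset.mem_of_mem_erase hx)).le
    set t := ⟪(ξ : EuclideanSpace ℝ (Fin n)), (x : EuclideanSpace ℝ (Fin n))⟫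
    have ht := hip ξ x
    have h1 : -1 ≤ t := neg_le_of_abs_le ht
    have : -(t^3) ≤ t^2 := by nlinarith
    exact mul_le_mul_of_nonneg_left this hwx
  -- weight bound
  have hwle : ∀ ξ ∈ s, w ξ ≤ 1 / (2 * n) := by
    intro ξ hξ
    have h2 := herase2 ξ hξ
    have h3 := herase3 ξ hξ
    have hsumle : ∑ x ∈ s.erase ξ,
        w x * (-(⟪(ξ : EuclideanSpace ℝ (Fin n)), (x : EuclideanSpace ℝ (Fin n))⟫)^3)
        ≤ ∑ x ∈ s.erase ξ,
        w x * (⟪(ξ : EuclideanSpace ℝ (Fin n)), (x : EuclideanSpace ℝ (Fin n))⟫)^2 :=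
      Finset.sum_le_sum (htermle ξ hξ)
    have hneg : ∑ x ∈ s.erase ξ,
        w x * (-(⟪(ξ : EuclideanSpace ℝ (Fin n)), (x : EuclideanSpace ℝ (Fin n))⟫)^3)
        = w ξ := by
      have : ∀ x, w x * (-(⟪(ξ : EuclideanSpace ℝ (Fin n)), (x : EuclideanSpace ℝ (Fin n))⟫)^3)
          = -(w x * (⟪(ξ : EuclideanSpace ℝ (Fin n)), (x : EuclideanSpace ℝ (Fin n))⟫)^3) := by
        intro x; ring
      simp only [this, Finset.sum_neg_distrib]
      linarith
    rw [hneg] at hsumle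
    have : ∑ x ∈ s.erase ξ,
        w x * (⟪(ξ : EuclideanSpace ℝ (Fin n)), (x : EuclideanSpace ℝ (Fin n))⟫)^2
        = 1/n - w ξ := by linarith
    rw [this] at hsumle
    have h4 : w ξ ≤ 1/n - w ξ := hsumle
    have h5 : (1:ℝ)/(2*n) = (1/n)/2 := by ring
    linarith
  -- theta norm as finite sum
  have hth : thetaNorm ν θ = ∑ x ∈ s, w x ^ θ := by
    apply tsum_eq_sum
    intro u hu
    rw [show (ν {u}).toReal = (0:ℝ) by rw [notin_supp_zero hrepr hu]; simp]
    exact Real.zero_rpow hθ.1.ne'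
  have hcast : ((2 * n : ℕ) : ℝ) = 2 * (n:ℝ) := by push_cast; ring
  have hsum_eq : ∑ x ∈ s, w x ^ θ = (2 * (n:ℝ)) ^ (1 - θ) := by
    rw [← hcast, ← hmin, hth]
  -- lower bound per term
  have hc_pow : ((1:ℝ) / (2*n)) ^ (θ - 1) = (2*(n:ℝ)) ^ (1-θ) := by
    have h' : ((2*(n:ℝ))⁻¹) ^ (θ-1) = (2*(n:ℝ)) ^ (-(θ-1)) := by
      rw [Real.inv_rpow h2n.le, ← Real.rpow_neg h2n.le]
    rw [one_div, h', neg_sub]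
  have hterm_lb : ∀ x ∈ s, w x * (2*(n:ℝ)) ^ (1-θ) ≤ w x ^ θ := by
    intro x hx
    rw [← hc_pow]
    exact rpow_lower (hwpos x hx) (hwle x hx) hθ.2
  have hsum_lb : ∑ x ∈ s, w x * (2*(n:ℝ)) ^ (1-θ) = (2*(n:ℝ)) ^ (1-θ) := by
    rw [← Finset.sum_mul, hsum1, one_mul]
  have heqterms : ∀ x ∈ s, w x * (2*(n:ℝ)) ^ (1-θ) = w x ^ θ := by
    have := (Finset.sum_eq_sum_iff_of_le hterm_lb).mp (by rw [hsum_lb, hsum_eq])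
    exact this
  have hwval : ∀ x ∈ s, w x = 1 / (2*n) := by
    intro x hx
    apply rpow_eq_forces (hwpos x hx) (hwle x hx) hθ.2
    rw [hc_pow]
    exact heqterms x hx
  -- equality in the third-moment chain: orthogonality dichotomy
  have hdichot : ∀ ξ ∈ s, ∀ x ∈ s, x ≠ ξ →
      ⟪(ξ : EuclideanSpace ℝ (Fin n)), (x : EuclideanSpace ℝ (Fin n))⟫ = 0 ∨ x = antipode ξ := by
    intro ξ hξ x hxs hxne
    have hxe : x ∈ s.erase ξ := Finset.mem_erase.mpr ⟨hxne, hxs⟩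
    have h2 := herase2 ξ hξ
    have h3 := herase3 ξ hξ
    have hneg : ∑ y ∈ s.erase ξ,
        w y * (-(⟪(ξ : EuclideanSpace ℝ (Fin n)), (y : EuclideanSpace ℝ (Fin n))⟫)^3)
        = w ξ := by
      have hh : ∀ y, w y * (-(⟪(ξ : EuclideanSpace ℝ (Fin n)), (y : EuclideanSpace ℝ (Fin n))⟫)^3)
          = -(w y * (⟪(ξ : EuclideanSpace ℝ (Fin n)), (y : EuclideanSpace ℝ (Fin n))⟫)^3) := by
        intro y; ring
      simp only [hh, Finset.sum_neg_distrib]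
      linarith
    have hsq : ∑ y ∈ s.erase ξ,
        w y * (⟪(ξ : EuclideanSpace ℝ (Fin n)), (y : EuclideanSpace ℝ (Fin n))⟫)^2
        = 1/n - w ξ := by linarith
    have hwx : w ξ = 1/(2*n) := hwval ξ hξ
    have hsums : ∑ y ∈ s.erase ξ,
        w y * (-(⟪(ξ : EuclideanSpace ℝ (Fin n)), (y : EuclideanSpace ℝ (Fin n))⟫)^3)
        = ∑ y ∈ s.erase ξ,
        w y * (⟪(ξ : EuclideanSpace ℝ (Fin n)), (y : EuclideanSpace ℝ (Fin n))⟫)^2 := by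
      rw [hneg, hsq, hwx]; ring
    have hterm := (Finset.sum_eq_sum_iff_of_le (htermle ξ hξ)).mp hsums x hxe
    -- so -(t^3) = t^2 with w x > 0
    have hwxpos := hwpos x hxs
    set t := ⟪(ξ : EuclideanSpace ℝ (Fin n)), (x : EuclideanSpace ℝ (Fin n))⟫ with hht
    have hteq : -(t^3) = t^2 := by
      have := mul_left_cancel₀ (ne_of_gt hwxpos) hterm
      linarith
    have ht2 : t^2 * (1 + t) = 0 := by nlinarith
    rcases mul_eq_zero.mp ht2 with h | h
    · left; exact pow_eq_zero_iff (by norm_num : 2 ≠ 0) |>.mp h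
    · right
      have htm1 : t = -1 := by linarith
      -- inner = -1 forces x = antipode ξ
      have hinner1 : ⟪(ξ : EuclideanSpace ℝ (Fin n)), -(x : EuclideanSpace ℝ (Fin n))⟫ = 1 := by
        rw [inner_neg_right, ← hht, htm1]; norm_num
      have hnx : ‖-(x : EuclideanSpace ℝ (Fin n))‖ = 1 := by rw [norm_neg]; exact sph_norm x
      have := (inner_eq_one_iff_of_norm_eq_one (sph_norm ξ) hnx).mp hinner1
      apply Subtype.ext
      rw [antipode_coe, this]
      simp
  -- antipode of a support point is a support point
  have hanti : ∀ ξ ∈ s, antipode ξ ∈ s := by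
    intro ξ hξ
    by_contra hni
    have h2 := herase2 ξ hξ
    have hwx : w ξ = 1/(2*n) := hwval ξ hξ
    have hzero : ∀ y ∈ s.erase ξ,
        w y * (⟪(ξ : EuclideanSpace ℝ (Fin n)), (y : EuclideanSpace ℝ (Fin n))⟫)^2 = 0 := by
      intro y hy
      obtain ⟨hyne, hys⟩ := Finset.mem_erase.mp hy
      rcases hdichot ξ hξ y hys hyne with h | h
      · rw [h]; ring
      · exact absurd (h ▸ hys) hni
    rw [Finset.sum_eq_zero hzero] at h2
    rw [hwx] at h2
    have : (1:ℝ)/(2*n) < 1/n := by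
      apply div_lt_div_of_pos_left <;> linarith
    linarith
  -- cardinality of the support
  have hcard : s.card = 2 * n := by
    have h1 : ∑ x ∈ s, w x = (s.card : ℝ) * (1/(2*n)) := by
      rw [Finset.sum_congr rfl hwval, Finset.sum_const, nsmul_eq_mul]
    rw [hsum1] at h1
    have h2 : (s.card : ℝ) = 2*n := by
      field_simp at h1
      linarith
    have h3 : ((2*n : ℕ):ℝ) = 2*(n:ℝ) := by push_cast; ring
    exact_mod_cast h2.trans h3.symm
  -- choose one point from each antipodal pair
  letI : LinearOrder (Sph n) := IsWellOrder.linearOrder WellOrderingRel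
  set tt : Finset (Sph n) := s.filter (fun x => x < antipode x) with htt
  have httsub : tt ⊆ s := Finset.filter_subset _ _
  have hlt : ∀ x ∈ tt, x < antipode x := fun x hx => (Finset.mem_filter.mp hx).2
  have hanti_lt : ∀ x ∈ s, ¬ x < antipode x → antipode x ∈ tt := by
    intro x hx hnlt
    refine Finset.mem_filter.mpr ⟨hanti x hx, ?_⟩
    rw [antipode_antipode]
    rcases lt_or_gt_of_ne (antipode_ne x) with h | h
    · exact h
    · exact absurd h hnlt
  have hsdecomp : s = tt ∪ tt.image antipode := by
    ext x
    constructor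
    · intro hx
      by_cases hxlt : x < antipode x
      · exact Finset.mem_union_left _ (Finset.mem_filter.mpr ⟨hx, hxlt⟩)
      · refine Finset.mem_union_right _ (Finset.mem_image.mpr ⟨antipode x, ?_, antipode_antipode x⟩)
        exact hanti_lt x hx hxlt
    · intro hx
      rcases Finset.mem_union.mp hx with h | h
      · exact httsub h
      · obtain ⟨y, hy, rfl⟩ := Finset.mem_image.mp h
        exact hanti y (httsub hy)
  have hdisj : Disjoint tt (tt.image antipode) := by
    rw [Finset.disjoint_left]
    intro x hx hx2
    obtain ⟨y, hy, hyx⟩ := Finset.mem_image.mp hx2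
    have h1 : y < antipode y := hlt y hy
    have h2 : x < antipode x := hlt x hx
    subst hyx
    rw [antipode_antipode] at h2
    exact lt_asymm h1 h2
  have hanti_injon : ∀ x ∈ tt, ∀ y ∈ tt, antipode x = antipode y → x = y := by
    intro x _ y _ hxy
    have := congrArg antipode hxy
    rwa [antipode_antipode, antipode_antipode] at this
  have hcardtt : tt.card = n := by
    have h1 : s.card = tt.card + (tt.image antipode).card := by
      rw [hsdecomp, Finset.card_union_of_disjoint hdisj]
    have h2 : (tt.image antipode).card = tt.card := Finset.card_image_of_injOn hanti_injon
    rw [hcard, h2] at h1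
    omega
  set e : { x // x ∈ tt } ≃ Fin n := Finset.equivFinOfCardEq hcardtt with he
  set u : Fin n → Sph n := fun i => ((e.symm i : { x // x ∈ tt }) : Sph n) with hu_def
  have hu_mem : ∀ i, u i ∈ tt := fun i => (e.symm i).2
  have hu_inj : Function.Injective u := by
    intro i j hij
    have : (e.symm i : { x // x ∈ tt }) = e.symm j := Subtype.ext hij
    simpa using congrArg e this
  have hu_ne_anti : ∀ i j, u j ≠ antipode (u i) := by
    intro i j hcon
    have h1 : u i < antipode (u i) := hlt (u i) (hu_mem i)
    have h2 : u j < antipode (u j) := hlt (u j) (hu_mem j)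
    rw [hcon, antipode_antipode] at h2
    exact lt_asymm h1 h2
  -- orthonormality
  have hone : Orthonormal ℝ (fun i => (u i : EuclideanSpace ℝ (Fin n))) := by
    rw [orthonormal_iff_ite]
    intro i j
    by_cases hij : i = j
    · subst hij
      simp only [if_pos rfl]
      exact sph_inner_self (u i)
    · rw [if_neg hij]
      have hne : u j ≠ u i := fun h => hij (hu_inj h).symm
      rcases hdichot (u i) (httsub (hu_mem i)) (u j) (httsub (hu_mem j)) hne with h | h
      · exact h
      · exact absurd h (hu_ne_anti i j)
  -- span
  have hspan : Submodule.span ℝ (Set.range fun i => (u i : EuclideanSpace ℝ (Fin n))) = ⊤ := by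
    apply LinearIndependent.span_eq_top_of_card_eq_finrank' hone.linearIndependent
    simp [finrank_euclideanSpace_fin]
  refine ⟨u, hone, hspan, ?_⟩
  -- the measure identity
  have hmass : ∀ x ∈ s, ν {x} = ((2*n : ℕ) : ℝ≥0∞)⁻¹ := by
    intro x hx
    have h1 : (ν {x}).toReal = 1/(2*n) := hwval x hx
    have hne0 : ((2*n : ℕ) : ℝ≥0∞) ≠ 0 := by
      simp only [ne_eq, Nat.cast_eq_zero]
      omega
    have hne2 : (((2*n : ℕ) : ℝ≥0∞))⁻¹ ≠ ⊤ := ENNReal.inv_ne_top.mpr hne0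
    have h2 : ((((2*n : ℕ) : ℝ≥0∞))⁻¹).toReal = 1/(2*n) := by
      rw [ENNReal.toReal_inv, ENNReal.toReal_natCast]
      push_cast
      ring
    exact (ENNReal.toReal_eq_toReal_iff' (measure_ne_top ν _) hne2).mp (h1.trans h2.symm)
  have hreindex : ∀ f : Sph n → Measure (Sph n),
      ∑ x ∈ tt, f x = ∑ i : Fin n, f (u i) := by
    intro f
    rw [← Finset.sum_coe_sort tt f]
    exact (Equiv.sum_comp e.symm (fun y : { x // x ∈ tt } => f (y : Sph n))).symm
  calc ν = ∑ x ∈ s, ν {x} • Measure.dirac x := hrepr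
    _ = ∑ x ∈ s, ((2*n : ℕ) : ℝ≥0∞)⁻¹ • Measure.dirac x :=
        Finset.sum_congr rfl (fun x hx => by rw [hmass x hx])
    _ = ∑ x ∈ tt, ((2*n : ℕ) : ℝ≥0∞)⁻¹ • Measure.dirac x
        + ∑ x ∈ tt.image antipode, ((2*n : ℕ) : ℝ≥0∞)⁻¹ • Measure.dirac x := by
        rw [hsdecomp, Finset.sum_union hdisj]
    _ = ∑ x ∈ tt, ((2*n : ℕ) : ℝ≥0∞)⁻¹ • Measure.dirac x
        + ∑ x ∈ tt, ((2*n : ℕ) : ℝ≥0∞)⁻¹ • Measure.dirac (antipode x) := by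
        rw [Finset.sum_image hanti_injon]
    _ = ∑ i : Fin n, ((2*n : ℕ) : ℝ≥0∞)⁻¹ • Measure.dirac (u i)
        + ∑ i : Fin n, ((2*n : ℕ) : ℝ≥0∞)⁻¹ • Measure.dirac (antipode (u i)) := by
        rw [hreindex (fun x => ((2*n : ℕ) : ℝ≥0∞)⁻¹ • Measure.dirac x),
          hreindex (fun x => ((2*n : ℕ) : ℝ≥0∞)⁻¹ • Measure.dirac (antipode x))]
    _ = ((2 * n : ℕ) : ℝ≥0∞)⁻¹ •
        ∑ i : Fin n, (Measure.dirac (u i) + Measure.dirac (antipode (u i))) := by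
        rw [Finset.smul_sum]
        simp only [smul_add]
        rw [Finset.sum_add_distrib]
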